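/- Downsampling with offset: with the notation of the downsampling property, for any p in F_2^n whose last b coordinates are zero, the B-dimensional WHT of m |-> x_{Psi_b m + p} at k in F_2^b equals sqrt(B/N) * sum over j in Null(Psi_b^T) of (-1)^{<p,j>} X_{Psi_b k + j}. -/

import Mathlib

open Matrix Finset

/-- Inner product over `𝔽₂`. -/
def ip {ι : Type*} [Fintype ι] (u v : ι → ZMod 2) : ZMod 2 := ∑ t, u t * v t

/-- `(-1)^b` for `b ∈ 𝔽₂`. -/
def sgn (a : ZMod 2) : ℝ := (-1 : ℝ) ^ a.val

/-- The Walsh-Hadamard transform. -/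
noncomputable def WHT {ι : Type*} [DecidableEq ι] [Fintype ι]
    (x : (ι → ZMod 2) → ℝ) (k : ι → ZMod 2) : ℝ :=
  (Real.sqrt (Fintype.card (ι → ZMod 2)))⁻¹ * ∑ m, sgn (ip k m) * x m

/-- `Ψ_b : 𝔽₂ᵇ → 𝔽₂ⁿ`, placing a `b`-bit vector in the last `b` coordinates. -/
def Psi (n b : ℕ) (hb : b ≤ n) (m : Fin b → ZMod 2) : Fin n → ZMod 2 :=
  fun i => if _ : (i : ℕ) < n - b then 0 else m ⟨(i : ℕ) - (n - b), by have := i.isLt; omega⟩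

/-- `Ψ_bᵀ : 𝔽₂ⁿ → 𝔽₂ᵇ`, extracting the last `b` coordinates. -/
def PsiT (n b : ℕ) (hb : b ≤ n) (j : Fin n → ZMod 2) : Fin b → ZMod 2 :=
  fun t => j ⟨n - b + (t : ℕ), by have := t.isLt; omega⟩

lemma sgn_zero : sgn 0 = 1 := rfl

lemma sgn_add (a b : ZMod 2) : sgn (a + b) = sgn a * sgn b := by
  unfold sgn
  rw [ZMod.val_add, ← pow_add]
  rcases Nat.even_or_odd (a.val + b.val) with h | h
  · rw [Nat.even_iff.mp h, h.neg_one_pow, pow_zero]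
  · rw [Nat.odd_iff.mp h, h.neg_one_pow, pow_one]

lemma sgn_sum {ι : Type*} (s : Finset ι) (f : ι → ZMod 2) :
    sgn (∑ t ∈ s, f t) = ∏ t ∈ s, sgn (f t) := by
  induction s using Finset.cons_induction with
  | empty => simp [sgn_zero]
  | cons a s ha ih => simp [Finset.sum_cons, Finset.prod_cons, sgn_add, ih]

lemma ip_comm {ι : Type*} [Fintype ι] (u v : ι → ZMod 2) : ip u v = ip v u := by
  simp [ip, mul_comm]

lemma ip_add_right {ι : Type*} [Fintype ι] (u v w : ι → ZMod 2) :
    ip u (v + w) = ip u v + ip u w := by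
  simp [ip, mul_add, Finset.sum_add_distrib]

lemma sum_sgn_mul (w : ZMod 2) : ∑ a : ZMod 2, sgn (a * w) = if w = 0 then 2 else 0 := by
  have huniv : (univ : Finset (ZMod 2)) = {0, 1} := rfl
  fin_cases w <;>
    simp [huniv, Finset.sum_insert, Finset.sum_singleton, sgn,
      show ZMod.val (1:ZMod 2) = 1 from rfl, show ((0:ZMod 2) : ZMod 2) ≠ 1 by decide]
  · change (-1:ℝ) ^ ((0:ZMod 2) * 0).val + (-1:ℝ) ^ ((1:ZMod 2) * 0).val
      = if (0:ZMod 2) = 0 then 2 else 0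
    norm_num
  · change (-1:ℝ) ^ ((0:ZMod 2) * 1).val + (-1:ℝ) ^ ((1:ZMod 2) * 1).val
      = if (1:ZMod 2) = 0 then 2 else 0
    rw [show ((1:ZMod 2) * 1).val = 1 from rfl, if_neg (show ¬ ((1:ZMod 2) = 0) by decide)]
    norm_num

lemma char_sum {ι : Type*} [DecidableEq ι] [Fintype ι] (w : ι → ZMod 2) :
    ∑ u : ι → ZMod 2, sgn (ip u w) =
      if w = 0 then ((2 : ℝ) ^ Fintype.card ι) else 0 := by
  have h1 : ∀ u : ι → ZMod 2, sgn (ip u w) = ∏ t, sgn (u t * w t) := fun u =>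
    sgn_sum _ _
  simp_rw [h1]
  rw [← Fintype.piFinset_univ, ← Finset.prod_univ_sum (fun _ => (univ : Finset (ZMod 2))) (fun t a => sgn (a * w t))]
  by_cases hw : w = 0
  · simp [hw, sum_sgn_mul, sgn_zero]
  · obtain ⟨t, ht⟩ := Function.ne_iff.mp hw
    rw [if_neg hw]
    apply Finset.prod_eq_zero (Finset.mem_univ t)
    simp only [Pi.zero_apply] at ht
    rw [sum_sgn_mul, if_neg ht]

variable {n b : ℕ}

def pad (hb : b < n) (u : Fin (n-b) → ZMod 2) (m : Fin b → ZMod 2) : Fin n → ZMod 2 :=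
  fun i => if h : (i : ℕ) < n - b then u ⟨i, h⟩ else m ⟨(i:ℕ) - (n-b), by have := i.isLt; omega⟩

def low (hb : b < n) (j : Fin n → ZMod 2) : Fin (n-b) → ZMod 2 :=
  fun a => j ⟨a, by have := a.isLt; omega⟩

lemma pad_add (hb : b < n) (u : Fin (n-b) → ZMod 2) (m : Fin b → ZMod 2) :
    pad hb u m = pad hb u 0 + pad hb 0 m := by
  funext i; by_cases h : (i:ℕ) < n - b <;> simp [pad, h]

lemma Psi_eq_pad (hb : b < n) (m : Fin b → ZMod 2) : Psi n b hb.le m = pad hb 0 m := by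
  funext i; by_cases h : (i:ℕ) < n - b <;> simp [Psi, pad, h]

lemma PsiT_pad (hb : b < n) (u : Fin (n-b) → ZMod 2) (m : Fin b → ZMod 2) :
    PsiT n b hb.le (pad hb u m) = m := by
  funext t
  have h : ¬ (n - b + (t:ℕ) < n - b) := by omega
  simp only [PsiT, pad, h, dif_neg]
  exact congrArg m (Fin.ext (by simp <;> omega))

lemma low_pad (hb : b < n) (u : Fin (n-b) → ZMod 2) (m : Fin b → ZMod 2) :
    low hb (pad hb u m) = u := by
  funext a
  have h : ((⟨(a:ℕ), by have := a.isLt; omega⟩ : Fin n) : ℕ) < n - b := a.isLt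
  simp only [low, pad, h, dif_pos]

lemma pad_low (hb : b < n) (j : Fin n → ZMod 2) : pad hb (low hb j) (PsiT n b hb.le j) = j := by
  funext i
  by_cases h : (i:ℕ) < n - b
  · simp only [pad, h, dif_pos, low]
  · simp only [pad, h, dif_neg, PsiT]
    exact congrArg j (Fin.ext (by simp <;> omega))

noncomputable def padEquiv (hb : b < n) :
    ((Fin (n-b) → ZMod 2) × (Fin b → ZMod 2)) ≃ (Fin n → ZMod 2) where
  toFun q := pad hb q.1 q.2
  invFun j := (low hb j, PsiT n b hb.le j)
  left_inv q := by simp [low_pad, PsiT_pad]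
  right_inv j := pad_low hb j

def e2 (hb : b < n) : Fin (n-b) ⊕ Fin b ≃ Fin n := finSumFinEquiv.trans (finCongr (by omega))

lemma e2_inl (hb : b < n) (a : Fin (n-b)) : ((e2 hb (Sum.inl a)) : ℕ) = (a : ℕ) := by
  simp [e2, finSumFinEquiv]

lemma e2_inr (hb : b < n) (t : Fin b) : ((e2 hb (Sum.inr t)) : ℕ) = n - b + (t : ℕ) := by
  simp [e2, finSumFinEquiv]

lemma ip_pad (hb : b < n) (u u' : Fin (n-b) → ZMod 2) (m m' : Fin b → ZMod 2) :
    ip (pad hb u m) (pad hb u' m') = ip u u' + ip m m' := by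
  classical
  have := Equiv.sum_comp (e2 hb) (fun i => pad hb u m i * pad hb u' m' i)
  rw [ip, ← this, Fintype.sum_sum_type]
  have key : ∀ (u : Fin (n-b) → ZMod 2) (m : Fin b → ZMod 2) (a : Fin (n-b)),
      pad hb u m (e2 hb (Sum.inl a)) = u a := by
    intro u m a
    rw [show e2 hb (Sum.inl a) = (⟨(a:ℕ), by have := a.isLt; omega⟩ : Fin n) from
      Fin.ext (e2_inl hb a)]
    exact congrFun (low_pad hb u m) a
  have key2 : ∀ (u : Fin (n-b) → ZMod 2) (m : Fin b → ZMod 2) (t : Fin b),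
      pad hb u m (e2 hb (Sum.inr t)) = m t := by
    intro u m t
    rw [show e2 hb (Sum.inr t) = (⟨n - b + (t:ℕ), by have := t.isLt; omega⟩ : Fin n) from
      Fin.ext (e2_inr hb t)]
    exact congrFun (PsiT_pad hb u m) t
  have h1 : ∀ a : Fin (n-b), pad hb u m (e2 hb (Sum.inl a)) * pad hb u' m' (e2 hb (Sum.inl a))
      = u a * u' a := fun a => by rw [key, key]
  have h2 : ∀ t : Fin b, pad hb u m (e2 hb (Sum.inr t)) * pad hb u' m' (e2 hb (Sum.inr t))
      = m t * m' t := fun t => by rw [key2, key2]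
  rw [Finset.sum_congr rfl (fun a _ => h1 a), Finset.sum_congr rfl (fun t _ => h2 t)]
  rfl

/-- Downsampling with offset. -/
theorem stmt6 (n b : ℕ) (hb : b < n) (x : (Fin n → ZMod 2) → ℝ)
    (p : Fin n → ZMod 2) (hp : PsiT n b hb.le p = 0) (k : Fin b → ZMod 2) :
    WHT (fun m => x (Psi n b hb.le m + p)) k =
      Real.sqrt ((2 ^ b : ℝ) / (2 ^ n : ℝ)) *
        ∑ j ∈ Finset.univ.filter (fun j : Fin n → ZMod 2 => PsiT n b hb.le j = 0),
          sgn (ip p j) * WHT x (Psi n b hb.le k + j) := by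
  classical
  have hpp : pad hb (low hb p) 0 = p := by
    conv_rhs => rw [← pad_low hb p]
    rw [hp]
  have hcardb : (Fintype.card (Fin b → ZMod 2) : ℝ) = 2 ^ b := by
    simp [Fintype.card_fun]
  have hcardn : (Fintype.card (Fin n → ZMod 2) : ℝ) = 2 ^ n := by
    simp [Fintype.card_fun]
  set S : ℝ := ∑ m : Fin b → ZMod 2, sgn (ip k m) * x (Psi n b hb.le m + p) with hS
  -- Step 1: reindex the filtered sum
  have step1 :
      ∑ j ∈ Finset.univ.filter (fun j : Fin n → ZMod 2 => PsiT n b hb.le j = 0),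
        sgn (ip p j) * WHT x (Psi n b hb.le k + j)
      = ∑ u : Fin (n-b) → ZMod 2,
          sgn (ip p (pad hb u 0)) * WHT x (Psi n b hb.le k + pad hb u 0) := by
    apply Finset.sum_nbij' (i := fun j => low hb j) (j := fun u => pad hb u 0)
    · intro a _; exact Finset.mem_univ _
    · intro u _; simp [PsiT_pad]
    · intro a ha
      simp only [Finset.mem_filter, Finset.mem_univ, true_and] at ha
      conv_rhs => rw [← pad_low hb a]
      rw [ha]
    · intro u _; exact low_pad hb u 0
    · intro a ha
      simp only [Finset.mem_filter, Finset.mem_univ, true_and] at ha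
      have : pad hb (low hb a) 0 = a := by
        conv_rhs => rw [← pad_low hb a]; rw [ha]
      rw [this]
  -- Step 2: for each u, unfold the inner WHT via padEquiv
  have step2 : ∀ u : Fin (n-b) → ZMod 2,
      WHT x (Psi n b hb.le k + pad hb u 0)
        = (Real.sqrt (2 ^ n))⁻¹ *
            ∑ u' : Fin (n-b) → ZMod 2, ∑ m' : Fin b → ZMod 2,
              sgn (ip u u' + ip k m') * x (pad hb u' m') := by
    intro u
    have hkey : Psi n b hb.le k + pad hb u 0 = pad hb u k := by
      rw [Psi_eq_pad hb, pad_add hb u k, add_comm]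
    rw [WHT, hcardn, hkey]
    congr 1
    rw [← Equiv.sum_comp (padEquiv hb)
      (fun y => sgn (ip (pad hb u k) y) * x y), Fintype.sum_prod_type]
    refine Finset.sum_congr rfl fun u' _ => Finset.sum_congr rfl fun m' _ => ?_
    have : padEquiv hb (u', m') = pad hb u' m' := rfl
    rw [this, ip_pad]
  -- rewrite sgn (ip p (pad u 0))
  have hip00 : ip (0 : Fin b → ZMod 2) 0 = 0 := by simp [ip]
  have step3 : ∀ u : Fin (n-b) → ZMod 2,
      ip p (pad hb u 0) = ip (low hb p) u := by
    intro u
    conv_lhs => rw [← hpp]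
    rw [ip_pad, hip00, add_zero]
  -- pointwise rearrangement of signs
  have point : ∀ (u u' : Fin (n-b) → ZMod 2) (m' : Fin b → ZMod 2),
      sgn (ip (low hb p) u) * (sgn (ip u u' + ip k m') * x (pad hb u' m'))
        = sgn (ip u (low hb p + u')) * (sgn (ip k m') * x (pad hb u' m')) := by
    intro u u' m'
    rw [ip_add_right, sgn_add, sgn_add, ip_comm u (low hb p), ip_comm u u']
    ring
  -- put together and swap sums
  rw [step1]
  have step4 :
      ∑ u : Fin (n-b) → ZMod 2,
          sgn (ip p (pad hb u 0)) * WHT x (Psi n b hb.le k + pad hb u 0)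
      = (Real.sqrt (2 ^ n))⁻¹ *
          ∑ u' : Fin (n-b) → ZMod 2, ∑ m' : Fin b → ZMod 2,
            (∑ u : Fin (n-b) → ZMod 2, sgn (ip u (low hb p + u'))) *
              (sgn (ip k m') * x (pad hb u' m')) := by
    simp_rw [step2, step3, Finset.mul_sum, Finset.sum_mul, ← mul_assoc,
      mul_comm _ ((Real.sqrt ((2:ℝ)^n))⁻¹), mul_assoc, point]
    rw [Finset.sum_comm]
    refine Finset.sum_congr rfl fun u' _ => ?_
    rw [Finset.sum_comm]
    refine Finset.sum_congr rfl fun m' _ => ?_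
    rw [Finset.mul_sum]
  rw [step4]
  -- evaluate the character sum
  have step5 : ∀ u' : Fin (n-b) → ZMod 2,
      (∑ u : Fin (n-b) → ZMod 2, sgn (ip u (low hb p + u')))
        = if u' = low hb p then (2:ℝ) ^ (n - b) else 0 := by
    intro u'
    rw [char_sum]
    have hiff : low hb p + u' = 0 ↔ u' = low hb p := by
      constructor
      · intro h
        funext t
        have h2 := congrFun h t
        simp only [Pi.add_apply, Pi.zero_apply] at h2
        have h3 := add_eq_zero_iff_eq_neg.mp h2
        rw [CharTwo.neg_eq] at h3
        exact h3.symm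
      · intro h
        rw [h]
        funext t
        exact CharTwo.add_self_eq_zero _
    simp [hiff, Fintype.card_fin]
  simp_rw [step5]
  have hpull : ∀ u' : Fin (n-b) → ZMod 2,
      ∑ m' : Fin b → ZMod 2,
          (if u' = low hb p then (2:ℝ)^(n-b) else 0) * (sgn (ip k m') * x (pad hb u' m'))
        = if u' = low hb p then
            ∑ m' : Fin b → ZMod 2, (2:ℝ)^(n-b) * (sgn (ip k m') * x (pad hb u' m'))
          else 0 := by
    intro u'
    split <;> simp
  simp_rw [hpull]
  rw [Finset.sum_ite_eq' Finset.univ (low hb p)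
    (fun u' => ∑ m' : Fin b → ZMod 2, (2:ℝ)^(n-b) * (sgn (ip k m') * x (pad hb u' m')))]
  simp only [Finset.mem_univ, if_true]
  have step6 : ∀ m' : Fin b → ZMod 2, pad hb (low hb p) m' = Psi n b hb.le m' + p := by
    intro m'
    rw [pad_add hb, Psi_eq_pad hb, hpp, add_comm]
  have hsum : ∑ m' : Fin b → ZMod 2, (2:ℝ)^(n-b) * (sgn (ip k m') * x (pad hb (low hb p) m'))
      = (2:ℝ)^(n-b) * S := by
    rw [Finset.mul_sum]
    refine Finset.sum_congr rfl fun m' _ => ?_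
    rw [step6]
  rw [hsum, WHT, hcardb]
  -- final numeric identity
  have h2b : (0:ℝ) ≤ 2 ^ b := by positivity
  have h2n : (0:ℝ) ≤ 2 ^ n := by positivity
  have hAB : Real.sqrt ((2^b : ℝ) / (2^n : ℝ)) = Real.sqrt (2^b) / Real.sqrt (2^n) :=
    Real.sqrt_div h2b _
  rw [hAB]
  have hA : Real.sqrt ((2:ℝ)^b) ^ 2 = 2^b := Real.sq_sqrt h2b
  have hB : Real.sqrt ((2:ℝ)^n) ^ 2 = 2^n := Real.sq_sqrt h2n
  have hA0 : (0:ℝ) < Real.sqrt (2^b) := Real.sqrt_pos.mpr (by positivity)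
  have hB0 : (0:ℝ) < Real.sqrt (2^n) := Real.sqrt_pos.mpr (by positivity)
  have hpow : (2:ℝ)^b * 2^(n-b) = 2^n := by
    rw [← pow_add]; congr 1; omega
  field_simp
  rw [← hS]
  linear_combination (-(2:ℝ)^(n-b) * S) * hA - S * hpow + S * hB
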